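/- Let ŝ : Δ_n × {1,…,n} → ℝ be a permutation-invariant classical scoring rule and let ρ ∈ Dens(n). If x_1,…,x_n and z_1,…,z_n are two spectral decompositions of ρ (both with eigenvalues in non-increasing order λ(ρ)), then Σ_{y=1}^n ŝ(λ(ρ), y) x_y x_y* = Σ_{y=1}^n ŝ(λ(ρ), y) z_y z_y*. In particular, the spectral score satisfies S[ŝ](ρ; ρ) = ŝ(λ(ρ); λ(ρ)). -/

import Mathlib

open Matrix BigOperators ComplexOrder

noncomputable section

/-- The space of `n × n` complex matrices. -/
abbrev Mat (n : ℕ) := Matrix (Fin n) (Fin n) ℂ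

/-- The set of density matrices on ℂⁿ: positive semidefinite with trace 1. -/
def Dens (n : ℕ) : Set (Mat n) := {ρ | ρ.PosSemidef ∧ ρ.trace = 1}

/-- Real inner product on (Hermitian) matrices: ⟨A,B⟩ = Tr(AB) (real part). -/
def hip {n : ℕ} (A B : Mat n) : ℝ := ((A * B).trace).re

/-- A POVM with finite outcome set `Y`. -/
def IsPOVM {n : ℕ} {Y : Type*} [Fintype Y] (μ : Y → Mat n) : Prop :=
  (∀ y, (μ y).PosSemidef) ∧ ∑ y, μ y = 1

/-- A projection-valued measurement. -/
def IsPVM {n : ℕ} {Y : Type*} [Fintype Y] (μ : Y → Mat n) : Prop :=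
  IsPOVM μ ∧ (∀ y, (μ y).IsHermitian ∧ μ y * μ y = μ y) ∧
    ∀ y y', y ≠ y' → μ y * μ y' = 0

/-- Expected score of a quantum score with report type `R`. -/
def expScoreR {n : ℕ} {R : Type*} {Y : Type*} [Fintype Y]
    (s : R → Y → ℝ) (μ : R → Y → Mat n) (r : R) (ρ : Mat n) : ℝ :=
  ∑ y, hip (μ r y) ρ * s r y

/-- Truthfulness of a quantum score. -/
def Truthful {n : ℕ} {Y : Type*} [Fintype Y]
    (s : Mat n → Y → ℝ) (μ : Mat n → Y → Mat n) : Prop :=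
  ∀ ρ ∈ Dens n, ∀ ρ' ∈ Dens n, expScoreR s μ ρ' ρ ≤ expScoreR s μ ρ ρ

/-- Strict truthfulness of a quantum score. -/
def StrictlyTruthful {n : ℕ} {Y : Type*} [Fintype Y]
    (s : Mat n → Y → ℝ) (μ : Mat n → Y → Mat n) : Prop :=
  Truthful s μ ∧ ∀ ρ ∈ Dens n, ∀ ρ' ∈ Dens n,
    expScoreR s μ ρ' ρ = expScoreR s μ ρ ρ → ρ' = ρ

/-- `d` is a (Hermitian-matrix) subgradient of `F` at `ρ` relative to `Dens n`. -/
def IsQSubgrad {n : ℕ} (F : Mat n → ℝ) (ρ d : Mat n) : Prop :=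
  ∀ τ ∈ Dens n, F ρ + hip d (τ - ρ) ≤ F τ

/-- `d` is a subgradient of `f` at `p` relative to `P ⊆ ℝ^Y`. -/
def IsCSubgrad {Y : Type*} [Fintype Y] (P : Set (Y → ℝ)) (f : (Y → ℝ) → ℝ)
    (p d : Y → ℝ) : Prop :=
  ∀ q ∈ P, f p + ∑ y, d y * (q y - p y) ≤ f q

/-- A POVM is tomographically complete if the real span of its elements is
the set of Hermitian matrices. -/
def TomoComplete {n : ℕ} {Y : Type*} [Fintype Y] (μ : Y → Mat n) : Prop :=
  ∀ X : Mat n, X.IsHermitian ↔ X ∈ Submodule.span ℝ (Set.range μ)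

/-- The eigenvalues of a Hermitian matrix, in non-increasing order
(junk value `0` on non-Hermitian matrices). -/
def eigs {n : ℕ} (ρ : Mat n) : Fin n → ℝ :=
  if h : ρ.IsHermitian then
    fun i => (h.eigenvalues ∘ (Tuple.sort h.eigenvalues)) i.rev
  else 0

/-- The outer product `v v*`. -/
def outer {n : ℕ} (v : Fin n → ℂ) : Mat n := Matrix.vecMulVec v (star v)

/-- A family of orthonormal vectors in ℂⁿ. -/
def ONFam {n k : ℕ} (x : Fin k → Fin n → ℂ) : Prop :=
  ∀ i j, ∑ m, (starRingEnd ℂ) (x i m) * x j m = if i = j then 1 else 0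

/-- `x` is a spectral decomposition of `ρ` (with eigenvalues in non-increasing
order `eigs ρ`). -/
def IsSpecDecomp {n : ℕ} (ρ : Mat n) (x : Fin n → Fin n → ℂ) : Prop :=
  ONFam x ∧ ρ = ∑ y, (eigs ρ y : ℂ) • outer (x y)

/-- Expected classical score `ŝ(q; p)`. -/
def cExp {n : ℕ} (s : (Fin n → ℝ) → Fin n → ℝ) (q p : Fin n → ℝ) : ℝ :=
  ∑ y, p y * s q y

/-- Properness of a classical scoring rule. -/
def Proper {n : ℕ} (s : (Fin n → ℝ) → Fin n → ℝ) : Prop :=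
  ∀ p ∈ stdSimplex ℝ (Fin n), ∀ q ∈ stdSimplex ℝ (Fin n), cExp s q p ≤ cExp s p p

/-- Strict properness of a classical scoring rule. -/
def StrictlyProper {n : ℕ} (s : (Fin n → ℝ) → Fin n → ℝ) : Prop :=
  Proper s ∧ ∀ p ∈ stdSimplex ℝ (Fin n), ∀ q ∈ stdSimplex ℝ (Fin n),
    cExp s q p = cExp s p p → q = p

/-- Permutation invariance of a classical scoring rule: `ŝ(p, y) = ŝ(πp, π y)`
where `(πp)_y = p_{π y}`. -/
def PermInv {n : ℕ} (s : (Fin n → ℝ) → Fin n → ℝ) : Prop :=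
  ∀ (π : Equiv.Perm (Fin n)) (p : Fin n → ℝ) (y : Fin n), s p y = s (p ∘ π) (π y)

/-- Expected spectral score `S[ŝ](ρ'; ρ)` computed using the spectral
decomposition `x` of the report `ρ'`. -/
def specExp {n : ℕ} (s : (Fin n → ℝ) → Fin n → ℝ) (x : Fin n → Fin n → ℂ)
    (ρ' ρ : Mat n) : ℝ :=
  ∑ y, hip (outer (x y)) ρ * s (eigs ρ') y

/-- Truthfulness of the spectral score `S[ŝ]`. -/
def SpecTruthful {n : ℕ} (s : (Fin n → ℝ) → Fin n → ℝ) : Prop :=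
  ∀ ρ ∈ Dens n, ∀ ρ' ∈ Dens n, ∀ x z, IsSpecDecomp ρ' x → IsSpecDecomp ρ z →
    specExp s x ρ' ρ ≤ specExp s z ρ ρ

/-- Strict truthfulness of the spectral score `S[ŝ]`. -/
def SpecStrictlyTruthful {n : ℕ} (s : (Fin n → ℝ) → Fin n → ℝ) : Prop :=
  SpecTruthful s ∧ ∀ ρ ∈ Dens n, ∀ ρ' ∈ Dens n, ∀ x z,
    IsSpecDecomp ρ' x → IsSpecDecomp ρ z →
    specExp s x ρ' ρ = specExp s z ρ ρ → ρ' = ρ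

/-- Elicitability of a property of density matrices by a quantum score. -/
def ElicitableProp {n : ℕ} {R : Type*} (Γ : Mat n → R) : Prop :=
  ∃ (m : ℕ) (s : R → Fin m → ℝ) (μ : R → Fin m → Mat n),
    (∀ r, IsPOVM (μ r)) ∧
    ∀ ρ ∈ Dens n, ∀ r, (∀ r', expScoreR s μ r' ρ ≤ expScoreR s μ r ρ) ↔ r = Γ ρ

/-- Identifiability of an ℝᵏ-valued property of density matrices. -/
def IdentifiableProp {n k : ℕ} (Γ : Mat n → (Fin k → ℝ)) : Prop :=
  ∃ V : (Fin k → ℝ) → Fin k → Mat n,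
    ∀ r ∈ Γ '' (Dens n), (∀ i, (V r i).IsHermitian) ∧
      ∀ ρ ∈ Dens n, (Γ ρ = r ↔ ∀ i, hip (V r i) ρ = 0)

/-- `Γ` is `k`-elicitable. -/
def KElicitable {n : ℕ} {R : Type*} (k : ℕ) (Γ : Mat n → R) : Prop :=
  ∃ (Γh : Mat n → (Fin k → ℝ)) (ψ : (Fin k → ℝ) → R),
    ElicitableProp Γh ∧ IdentifiableProp Γh ∧ ∀ ρ ∈ Dens n, Γ ρ = ψ (Γh ρ)

end

section AuxSpectral

/-- An orthonormal family `w` gives a unitary matrix with columns `w y`. -/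
lemma onfam_unitary {n : ℕ} {w : Fin n → Fin n → ℂ} (hw : ONFam w) :
    (Matrix.of (fun a y => w y a))ᴴ * Matrix.of (fun a y => w y a) = 1 := by
  ext i j
  simpa [Matrix.mul_apply, Matrix.conjTranspose_apply, Matrix.one_apply] using hw i j

/-- A spectral-type sum equals a matrix product `W D Wᴴ`. -/
lemma decomp_matrix {n : ℕ} (d : Fin n → ℂ) (w : Fin n → Fin n → ℂ) :
    ∑ y, d y • outer (w y) =
      Matrix.of (fun a y => w y a) * Matrix.diagonal d *
        (Matrix.of (fun a y => w y a))ᴴ := by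
  ext a b
  simp only [Matrix.sum_apply, Matrix.smul_apply, outer, Matrix.vecMulVec_apply,
    Pi.star_apply, Matrix.mul_apply, Matrix.conjTranspose_apply, Matrix.of_apply,
    smul_eq_mul, Matrix.diagonal_apply, ite_mul, zero_mul, mul_ite, mul_zero,
    Finset.sum_ite_eq, Finset.sum_ite_eq', Finset.mem_univ, if_true]
  exact Finset.sum_congr rfl fun y _ => by ring

lemma comm_of_eq {n : ℕ} (X Z D : Mat n) (hXu : Xᴴ * X = 1) (hZu : Zᴴ * Z = 1)
    (h1 : X * D * Xᴴ = Z * D * Zᴴ) : D * (Xᴴ * Z) = (Xᴴ * Z) * D := by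
  have e := congrArg (fun A => Xᴴ * A * Z) h1
  simp only [← Matrix.mul_assoc] at e ⊢
  rw [hXu, Matrix.one_mul] at e
  rw [Matrix.mul_assoc (Xᴴ * Z * D) Zᴴ Z, hZu, Matrix.mul_one] at e
  exact e

lemma unitary_conj_eq {n : ℕ} (X Z D' : Mat n) (hXu : Xᴴ * X = 1) (hXu' : X * Xᴴ = 1)
    (hZu' : Z * Zᴴ = 1) (hcomm : D' * (Xᴴ * Z) = (Xᴴ * Z) * D') :
    X * D' * Xᴴ = Z * D' * Zᴴ := by
  set U : Mat n := Xᴴ * Z with hU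
  have hZX : Z = X * U := by rw [hU, ← Matrix.mul_assoc, hXu', Matrix.one_mul]
  have hUU : U * Uᴴ = 1 := by
    rw [hU, Matrix.conjTranspose_mul, Matrix.conjTranspose_conjTranspose,
      Matrix.mul_assoc, ← Matrix.mul_assoc Z Zᴴ X, hZu', Matrix.one_mul, hXu]
  have e2 : U * D' * Uᴴ = D' := by
    rw [← hcomm, Matrix.mul_assoc, hUU, Matrix.mul_one]
  have e1 : X * U * D' * (Uᴴ * Xᴴ) = X * (U * D' * Uᴴ) * Xᴴ := by
    simp only [Matrix.mul_assoc]
  conv_rhs => rw [hZX]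
  rw [Matrix.conjTranspose_mul, e1, e2]

end AuxSpectral

/-- the spectral score is independent of the choice of spectral
decomposition, and `S[ŝ](ρ;ρ) = ŝ(λ(ρ);λ(ρ))`. -/
theorem spectral_form {n : ℕ} (sh : (Fin n → ℝ) → Fin n → ℝ) (hperm : PermInv sh)
    (ρ : Mat n) (hρ : ρ ∈ Dens n)
    (x z : Fin n → Fin n → ℂ) (hx : IsSpecDecomp ρ x) (hz : IsSpecDecomp ρ z) :
    (∑ y, (sh (eigs ρ) y : ℂ) • outer (x y) =
      ∑ y, (sh (eigs ρ) y : ℂ) • outer (z y)) ∧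
    specExp sh x ρ ρ = cExp sh (eigs ρ) (eigs ρ) := by
  classical
  obtain ⟨hxon, hxρ⟩ := hx
  obtain ⟨hzon, hzρ⟩ := hz
  set l : Fin n → ℝ := eigs ρ with hl
  set X : Mat n := Matrix.of (fun a y => x y a) with hXdef
  set Z : Mat n := Matrix.of (fun a y => z y a) with hZdef
  have hXu : Xᴴ * X = 1 := onfam_unitary hxon
  have hZu : Zᴴ * Z = 1 := onfam_unitary hzon
  have hXu' : X * Xᴴ = 1 := mul_eq_one_comm.mp hXu
  have hZu' : Z * Zᴴ = 1 := mul_eq_one_comm.mp hZu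
  set D : Mat n := Matrix.diagonal (fun y => (l y : ℂ)) with hDdef
  have hρX : ρ = X * D * Xᴴ := by rw [hxρ]; exact decomp_matrix _ _
  have hρZ : ρ = Z * D * Zᴴ := by rw [hzρ]; exact decomp_matrix _ _
  have hDU : D * (Xᴴ * Z) = (Xᴴ * Z) * D :=
    comm_of_eq X Z D hXu hZu (hρX.symm.trans hρZ)
  have hsh : ∀ i j : Fin n, l i = l j → sh l i = sh l j := by
    intro i j hij
    have hswap : l ∘ (Equiv.swap i j) = l := by
      funext m
      rcases eq_or_ne m i with rfl | hmi
      · simp [Equiv.swap_apply_left, hij]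
      rcases eq_or_ne m j with rfl | hmj
      · simp [Equiv.swap_apply_right, hij]
      · simp [Equiv.swap_apply_of_ne_of_ne hmi hmj]
    have h := hperm (Equiv.swap i j) l i
    rwa [hswap, Equiv.swap_apply_left] at h
  set D' : Mat n := Matrix.diagonal (fun y => (sh l y : ℂ)) with hD'def
  have hD'U : D' * (Xᴴ * Z) = (Xᴴ * Z) * D' := by
    ext i j
    simp only [hD'def, Matrix.diagonal_mul, Matrix.mul_diagonal]
    rcases eq_or_ne ((Xᴴ * Z) i j) 0 with h0 | h0
    · simp [h0]
    · have hc := congrFun (congrFun hDU i) j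
      simp only [hDdef, Matrix.diagonal_mul, Matrix.mul_diagonal] at hc
      rw [mul_comm ((Xᴴ * Z) i j)] at hc
      have hlij : (l i : ℂ) = l j := mul_right_cancel₀ h0 hc
      have : l i = l j := by exact_mod_cast hlij
      rw [hsh i j this, mul_comm]
  have houter : ∀ y : Fin n, outer (x y) =
      X * Matrix.diagonal (fun j => if j = y then (1 : ℂ) else 0) * Xᴴ := by
    intro y
    rw [← decomp_matrix]
    simp [ite_smul, Finset.sum_ite_eq']
  have hipval : ∀ y, hip (outer (x y)) ρ = l y := by
    intro y
    have htr : (outer (x y) * ρ).trace = (l y : ℂ) := by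
      rw [houter y]
      conv_lhs => rw [hρX]
      set Dy : Mat n := Matrix.diagonal (fun j => if j = y then (1 : ℂ) else 0) with hDy
      have e : (X * Dy * Xᴴ) * (X * D * Xᴴ) = X * (Dy * D) * Xᴴ := by
        simp only [← Matrix.mul_assoc]
        rw [Matrix.mul_assoc (X * Dy) Xᴴ X, hXu, Matrix.mul_one,
          Matrix.mul_assoc X Dy D]
      rw [e, Matrix.trace_mul_comm, ← Matrix.mul_assoc, hXu, Matrix.one_mul,
        Matrix.diagonal_mul_diagonal, Matrix.trace_diagonal]
      simp [Finset.sum_ite_eq']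
    simp [hip, htr]
  refine ⟨?_, ?_⟩
  · rw [decomp_matrix (fun y => ((sh l y : ℝ) : ℂ)) x,
      decomp_matrix (fun y => ((sh l y : ℝ) : ℂ)) z]
    exact unitary_conj_eq X Z D' hXu hXu' hZu' hD'U
  · simp only [specExp, cExp, hipval]
    rfl
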